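/- arXiv:1804.06864 — 2 statements merged into one kernel-verified Lean document; each statement's English description precedes it below -/
import Mathlib

section
/- Let A be any finite set of vertices of T. Then the exterior boundary satisfies |H(A)| ≥ |A|. -/
open SimpleGraph

/-- `x'` is a child of `x` in the tree `G` rooted at `x₀`: it is adjacent to `x`
and one step further away from the root. -/
def IsChild {V : Type*} (G : SimpleGraph V) (x₀ x x' : V) : Prop :=
  G.Adj x x' ∧ G.dist x₀ x' = G.dist x₀ x + 1

/-- The subtree generated by `x'` (relative to `x`): the set of vertices reachable
from `x'` by a walk not passing through `x`. -/
def SubtreeOf {V : Type*} (G : SimpleGraph V) (x x' : V) : Set V :=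
  {y | ∃ p : G.Walk x' y, x ∉ p.support}

/-- The frontier of a set `A`: vertices `x ∈ A` having a child `x'` whose
subtree is disjoint from `A`. -/
def Frontier {V : Type*} (G : SimpleGraph V) (x₀ : V) (A : Set V) : Set V :=
  {x ∈ A | ∃ x', IsChild G x₀ x x' ∧ SubtreeOf G x x' ∩ A = ∅}

/-- The exterior boundary of `A`: the children `x'` of frontier vertices `x`
whose subtree is disjoint from `A`. -/
def ExtBoundary {V : Type*} (G : SimpleGraph V) (x₀ : V) (A : Set V) : Set V :=
  {x' | ∃ x ∈ Frontier G x₀ A, IsChild G x₀ x x' ∧ SubtreeOf G x x' ∩ A = ∅}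

section Aux

variable {V : Type*} {G : SimpleGraph V}

/-- Two paths with the same endpoints in an acyclic graph are equal. -/
private lemma paths_eq (hacyc : G.IsAcyclic) {u v : V} {p q : G.Walk u v}
    (hp : p.IsPath) (hq : q.IsPath) : p = q := by
  have := hacyc.path_unique ⟨p, hp⟩ ⟨q, hq⟩
  exact congrArg Subtype.val this

/-- In a tree, any path realizes the distance between its endpoints. -/
private lemma path_length_eq_dist (hconn : G.Connected) (hacyc : G.IsAcyclic) {u v : V}
    {p : G.Walk u v} (hp : p.IsPath) : p.length = G.dist u v := by
  classical
  obtain ⟨w, hw⟩ := hconn.exists_walk_length_eq_dist u v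
  have h1 : p = w.bypass := paths_eq hacyc hp w.bypass_isPath
  have h1' : p.length = w.bypass.length := by rw [h1]
  have h2 := w.length_bypass_le
  have h3 := SimpleGraph.dist_le p
  omega

private lemma isPath_concat' {u v w : V} {p : G.Walk u v} (hp : p.IsPath) (h : G.Adj v w)
    (hw : w ∉ p.support) : (p.concat h).IsPath := by
  rw [Walk.isPath_def, Walk.support_concat]
  rw [Walk.isPath_def] at hp
  simp [List.concat_eq_append, List.nodup_append, hp]
  intro a ha h'
  subst h'
  exact hw ha

/-- Key step lemma: for adjacent `v, z`, the path from the root to one of them extends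
the path to the other by the connecting edge. -/
private lemma step_lemma (hconn : G.Connected) (hacyc : G.IsAcyclic) {x₀ v z : V}
    (e : G.Adj v z) {p : G.Walk x₀ v} {q : G.Walk x₀ z}
    (hp : p.IsPath) (hq : q.IsPath) :
    q = p.concat e ∨ p = q.concat e.symm := by
  classical
  by_cases hz : z ∈ p.support
  · right
    have hvz : v ≠ z := e.ne
    have ht : (p.takeUntil z hz).IsPath := hp.takeUntil hz
    have hv : v ∉ (p.takeUntil z hz).support := by
      intro hv
      have hsp : (p.takeUntil z hz).append (p.dropUntil z hz) = p := p.take_spec hz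
      have hnodup : p.support.Nodup := hp.support_nodup
      have hps := congrArg Walk.support hsp
      rw [Walk.support_append] at hps
      rw [← hps] at hnodup
      have hvd : v ∈ (p.dropUntil z hz).support.tail := by
        have h1 : v ∈ (p.dropUntil z hz).support := Walk.end_mem_support _
        rw [(p.dropUntil z hz).support_eq_cons] at h1
        rcases List.mem_cons.mp h1 with h1 | h1
        · exact absurd h1 hvz
        · exact h1
      rw [List.nodup_append] at hnodup
      exact hnodup.2.2 v hv v hvd rfl
    have : p = (p.takeUntil z hz).concat e.symm :=
      paths_eq hacyc hp (isPath_concat' ht e.symm hv)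
    rw [this, paths_eq hacyc ht hq]
  · left
    exact paths_eq hacyc hq (isPath_concat' hp e hz)

/-- Adjacent vertices are at distances differing by exactly one from the root. -/
private lemma dist_adj (hconn : G.Connected) (hacyc : G.IsAcyclic) (x₀ : V) {v z : V}
    (e : G.Adj v z) :
    G.dist x₀ z = G.dist x₀ v + 1 ∨ G.dist x₀ v = G.dist x₀ z + 1 := by
  obtain ⟨p, hp, hpl⟩ := (hconn x₀ v).exists_path_of_dist
  obtain ⟨q, hq, hql⟩ := (hconn x₀ z).exists_path_of_dist
  rcases step_lemma hconn hacyc e hp hq with h | h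
  · left
    have : q.length = p.length + 1 := by rw [h, Walk.length_concat]
    omega
  · right
    have : p.length = q.length + 1 := by rw [h, Walk.length_concat]
    omega

/-- Uniqueness of the parent: a vertex has at most one neighbour closer to the root. -/
private lemma parent_unique (hconn : G.Connected) (hacyc : G.IsAcyclic) (x₀ : V) {x z₁ z₂ : V}
    (e₁ : G.Adj x z₁) (e₂ : G.Adj x z₂)
    (h₁ : G.dist x₀ z₁ + 1 = G.dist x₀ x) (h₂ : G.dist x₀ z₂ + 1 = G.dist x₀ x) :
    z₁ = z₂ := by
  obtain ⟨p, hp, hpl⟩ := (hconn x₀ x).exists_path_of_dist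
  obtain ⟨p₁, hp₁, hp₁l⟩ := (hconn x₀ z₁).exists_path_of_dist
  obtain ⟨p₂, hp₂, hp₂l⟩ := (hconn x₀ z₂).exists_path_of_dist
  have k₁ : p = p₁.concat e₁.symm := by
    rcases step_lemma hconn hacyc e₁.symm hp₁ hp with h | h
    · exact h
    · exfalso
      have : p₁.length = p.length + 1 := by rw [h, Walk.length_concat]
      omega
  have k₂ : p = p₂.concat e₂.symm := by
    rcases step_lemma hconn hacyc e₂.symm hp₂ hp with h | h
    · exact h
    · exfalso
      have : p₂.length = p.length + 1 := by rw [h, Walk.length_concat]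
      omega
  obtain ⟨hv, -⟩ := Walk.concat_inj (k₁.symm.trans k₂)
  exact hv

/-- If `u` is a child of `y` and there is a walk from `u` to `z` avoiding `y`,
then `u` lies on the path from the root to `z`. -/
private lemma child_mem_path (hconn : G.Connected) (hacyc : G.IsAcyclic) {x₀ y : V} :
    ∀ {u z : V} (w : G.Walk u z),
      (G.Adj y u ∧ G.dist x₀ u = G.dist x₀ y + 1) → y ∉ w.support →
      ∀ q : G.Walk x₀ z, q.IsPath → u ∈ q.support := by
  intro u z w
  induction w using SimpleGraph.Walk.concatRec with
  | Hnil =>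
    intro _ _ q hq
    exact q.end_mem_support
  | Hconcat p h IH =>
    rename_i u' v' z'
    intro hch hy q hq
    obtain ⟨hadj, hdist⟩ := hch
    have hyp : y ∉ p.support := by
      intro hmem
      exact hy (by rw [Walk.support_concat]
                   exact List.mem_append_left _ hmem)
    have hyz : y ≠ z' := by
      intro hmem
      exact hy (by rw [Walk.support_concat, hmem]; simp)
    obtain ⟨r, hr, hrl⟩ := (hconn x₀ v').exists_path_of_dist
    have hur : u' ∈ r.support := IH ⟨hadj, hdist⟩ hyp r hr
    rcases step_lemma hconn hacyc h hr hq with hcase | hcase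
    · rw [hcase, Walk.support_concat]
      exact List.mem_append_left _ hur
    · have hsup : r.support = q.support ++ [v'] := by
        rw [hcase, Walk.support_concat]
      rw [hsup] at hur
      rcases List.mem_append.mp hur with h1 | h1
      · exact h1
      · exfalso
        have huv : u' = v' := List.mem_singleton.mp h1
        have hql := path_length_eq_dist hconn hacyc hq
        have hrl' := path_length_eq_dist hconn hacyc hr
        have hlen : r.length = q.length + 1 := by rw [hcase, Walk.length_concat]
        subst huv
        have hdz : G.dist x₀ z' + 1 = G.dist x₀ u' := by omega
        have hdy : G.dist x₀ y + 1 = G.dist x₀ u' := by omega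
        have : z' = y := parent_unique hconn hacyc x₀ h hadj.symm hdz hdy
        exact hyz this.symm

/-- Vertices of the subtree of a child are strictly farther from the root. -/
private lemma subtree_dist (hconn : G.Connected) (hacyc : G.IsAcyclic) {x₀ y y' z : V}
    (hc : IsChild G x₀ y y') (hz : z ∈ SubtreeOf G y y') :
    G.dist x₀ y < G.dist x₀ z := by
  classical
  obtain ⟨w, hw⟩ := hz
  obtain ⟨q, hq, hql⟩ := (hconn x₀ z).exists_path_of_dist
  have hmem : y' ∈ q.support :=
    child_mem_path hconn hacyc w ⟨hc.1, hc.2⟩ hw q hq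
  have h1 : G.dist x₀ y' ≤ (q.takeUntil y' hmem).length := SimpleGraph.dist_le _
  have h2 := q.length_takeUntil_le hmem
  have := hc.2
  omega

/-- Every vertex of degree at least 3 has two distinct children. -/
private lemma two_children (hconn : G.Connected) (hacyc : G.IsAcyclic) (x₀ : V)
    [G.LocallyFinite] {x : V} (hdeg : 3 ≤ G.degree x) :
    ∃ c₁ c₂, c₁ ≠ c₂ ∧ IsChild G x₀ x c₁ ∧ IsChild G x₀ x c₂ := by
  classical
  set N := G.neighborFinset x with hN
  set S := N.filter (fun z => G.dist x₀ z = G.dist x₀ x + 1) with hS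
  have hcompl : (N \ S).card ≤ 1 := by
    refine Finset.card_le_one.mpr ?_
    intro a ha b hb
    have ha' : G.Adj x a ∧ ¬ G.dist x₀ a = G.dist x₀ x + 1 := by
      simp only [hS, Finset.mem_sdiff, Finset.mem_filter, hN, mem_neighborFinset] at ha
      tauto
    have hb' : G.Adj x b ∧ ¬ G.dist x₀ b = G.dist x₀ x + 1 := by
      simp only [hS, Finset.mem_sdiff, Finset.mem_filter, hN, mem_neighborFinset] at hb
      tauto
    have hda : G.dist x₀ x = G.dist x₀ a + 1 := by
      rcases dist_adj hconn hacyc x₀ ha'.1 with h | h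
      · exact absurd h ha'.2
      · exact h
    have hdb : G.dist x₀ x = G.dist x₀ b + 1 := by
      rcases dist_adj hconn hacyc x₀ hb'.1 with h | h
      · exact absurd h hb'.2
      · exact h
    exact parent_unique hconn hacyc x₀ ha'.1 hb'.1 hda.symm hdb.symm
  have hsub : S ⊆ N := Finset.filter_subset _ _
  have hScard : 2 ≤ S.card := by
    have := Finset.card_sdiff_add_card_eq_card hsub
    have hNc : 3 ≤ N.card := by rw [hN, G.card_neighborFinset_eq_degree]; exact hdeg
    omega
  obtain ⟨c₁, hc₁, c₂, hc₂, hne⟩ := Finset.one_lt_card.mp (show 1 < S.card by omega)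
  have hc₁' : G.Adj x c₁ ∧ G.dist x₀ c₁ = G.dist x₀ x + 1 := by
    simp only [hS, Finset.mem_filter, hN, mem_neighborFinset] at hc₁; exact hc₁
  have hc₂' : G.Adj x c₂ ∧ G.dist x₀ c₂ = G.dist x₀ x + 1 := by
    simp only [hS, Finset.mem_filter, hN, mem_neighborFinset] at hc₂; exact hc₂
  exact ⟨c₁, c₂, hne, hc₁', hc₂'⟩

/-- Subtrees of distinct children of the same vertex are disjoint. -/
private lemma subtree_disjoint (hacyc : G.IsAcyclic) {x₀ y b₁ b₂ x : V}
    (h₁ : IsChild G x₀ y b₁) (h₂ : IsChild G x₀ y b₂) (hne : b₁ ≠ b₂)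
    (hx₁ : x ∈ SubtreeOf G y b₁) (hx₂ : x ∈ SubtreeOf G y b₂) : False := by
  classical
  obtain ⟨w₁, hw₁⟩ := hx₁
  obtain ⟨w₂, hw₂⟩ := hx₂
  set u := w₁.append w₂.reverse with hu
  have hyu : y ∉ u.support := by
    intro hmem
    rw [hu, Walk.support_append] at hmem
    rcases List.mem_append.mp hmem with h | h
    · exact hw₁ h
    · exact hw₂ (by
        have := List.mem_of_mem_tail h
        rwa [Walk.support_reverse, List.mem_reverse] at this)
  have hby : y ∉ u.bypass.support := fun h => hyu (u.support_bypass_subset h)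
  set p2 : G.Walk b₁ b₂ := Walk.cons h₁.1.symm (Walk.cons h₂.1 Walk.nil) with hp2
  have hp2path : p2.IsPath := by
    rw [hp2, Walk.isPath_def]
    simp [Walk.support_cons]
    exact ⟨⟨h₁.1.ne', hne⟩, h₂.1.ne⟩
  have : u.bypass = p2 := paths_eq hacyc u.bypass_isPath hp2path
  apply hby
  rw [this, hp2]
  simp [Walk.support_cons]

private lemma extBoundary_finite {x₀ : V} [G.LocallyFinite] {A : Set V} (hA : A.Finite) :
    (ExtBoundary G x₀ A).Finite := by
  apply Set.Finite.subset (hA.biUnion (fun x _ => (G.neighborSet x).toFinite))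
  rintro b ⟨x, ⟨hxA, -⟩, hch, -⟩
  exact Set.mem_biUnion hxA hch.1

end Aux

theorem ext_boundary_card_ge {V : Type*} [Infinite V] (G : SimpleGraph V)
    [G.LocallyFinite] (hconn : G.Connected) (hacyc : G.IsAcyclic)
    (x₀ : V) (M : ℕ) (hdeg : ∀ x, 3 ≤ G.degree x ∧ G.degree x ≤ M)
    (A : Set V) (hA : A.Finite) :
    A.ncard ≤ (ExtBoundary G x₀ A).ncard := by
  classical
  suffices H : ∀ n (A : Set V), A.Finite → A.ncard = n →
      A.ncard ≤ (ExtBoundary G x₀ A).ncard from H _ A hA rfl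
  intro n
  induction n using Nat.strong_induction_on with
  | _ n IH =>
    intro A hA hcard
    rcases Set.eq_empty_or_nonempty A with rfl | hne
    · simp
    -- pick x ∈ A at maximal distance from the root
    obtain ⟨x, hxA, hxmax⟩ : ∃ x ∈ A, ∀ z ∈ A, G.dist x₀ z ≤ G.dist x₀ x := by
      obtain ⟨x, hx, hmax⟩ := hA.toFinset.exists_max_image (fun z => G.dist x₀ z)
        (by simpa using hne)
      exact ⟨x, by simpa using hx, fun z hz => hmax z (by simpa using hz)⟩
    set A' := A \ {x} with hA'def
    have hA' : A'.Finite := hA.diff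
    have hAcard : A'.ncard + 1 = A.ncard := Set.ncard_diff_singleton_add_one hxA hA
    have hn1 : 1 ≤ n := by
      have := (Set.ncard_pos hA).mpr hne
      omega
    have hIH : A'.ncard ≤ (ExtBoundary G x₀ A').ncard :=
      IH A'.ncard (by omega) A' hA' rfl
    -- x has two distinct children, both in ExtBoundary A and not in ExtBoundary A'
    obtain ⟨c₁, c₂, hcne, hch₁, hch₂⟩ := two_children hconn hacyc x₀ (hdeg x).1
    have hSdisj : ∀ c, IsChild G x₀ x c → SubtreeOf G x c ∩ A = ∅ := by
      intro c hc
      rw [Set.eq_empty_iff_forall_notMem]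
      rintro z ⟨hzS, hzA⟩
      exact absurd (hxmax z hzA) (not_le.mpr (subtree_dist hconn hacyc hc hzS))
    have hxF : x ∈ Frontier G x₀ A := ⟨hxA, c₁, hch₁, hSdisj c₁ hch₁⟩
    have hcH : ∀ c, IsChild G x₀ x c → c ∈ ExtBoundary G x₀ A :=
      fun c hc => ⟨x, hxF, hc, hSdisj c hc⟩
    have hcH' : ∀ c, IsChild G x₀ x c → c ∉ ExtBoundary G x₀ A' := by
      rintro c hc ⟨y, ⟨hyA', -⟩, hyc, -⟩
      have e1 := hyc.2
      have e2 := hc.2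
      have : y = x := parent_unique hconn hacyc x₀ hyc.1.symm hc.1.symm
        (by omega) (by omega)
      rw [hA'def] at hyA'
      exact hyA'.2 (by rw [this]; rfl)
    -- elements of (ExtBoundary A') \ (ExtBoundary A) are unique
    have hD : ∀ b₁ ∈ ExtBoundary G x₀ A' \ ExtBoundary G x₀ A,
        ∀ b₂ ∈ ExtBoundary G x₀ A' \ ExtBoundary G x₀ A, b₁ = b₂ := by
      rintro b₁ ⟨hb₁', hb₁⟩ b₂ ⟨hb₂', hb₂⟩
      obtain ⟨y₁, ⟨hy₁A', -⟩, hych₁, hyS₁⟩ := hb₁'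
      obtain ⟨y₂, ⟨hy₂A', -⟩, hych₂, hyS₂⟩ := hb₂'
      have hxS : ∀ (y b : V), y ∈ A' → IsChild G x₀ y b → SubtreeOf G y b ∩ A' = ∅ →
          b ∉ ExtBoundary G x₀ A → x ∈ SubtreeOf G y b := by
        intro y b hyA' hch hS hbH
        by_contra hx
        refine hbH ⟨y, ⟨hyA'.1, b, hch, ?_⟩, hch, ?_⟩ <;>
        · rw [Set.eq_empty_iff_forall_notMem]
          rintro z ⟨hzS, hzA⟩
          rcases eq_or_ne z x with rfl | hzx
          · exact hx hzS
          · exact (Set.eq_empty_iff_forall_notMem.mp hS) z ⟨hzS, hzA, hzx⟩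
      have hx₁ : x ∈ SubtreeOf G y₁ b₁ := hxS y₁ b₁ hy₁A' hych₁ hyS₁ hb₁
      have hx₂ : x ∈ SubtreeOf G y₂ b₂ := hxS y₂ b₂ hy₂A' hych₂ hyS₂ hb₂
      by_contra hbne
      obtain ⟨w₁, hw₁⟩ := hx₁
      obtain ⟨w₂, hw₂⟩ := hx₂
      rcases eq_or_ne y₁ y₂ with rfl | hyne
      · exact subtree_disjoint hacyc hych₁ hych₂ hbne ⟨w₁, hw₁⟩ ⟨w₂, hw₂⟩
      · by_cases hy₁w₂ : y₁ ∈ w₂.support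
        · -- then y₁ ∈ SubtreeOf y₂ b₂, contradicting disjointness from A'
          have : y₁ ∈ SubtreeOf G y₂ b₂ := by
            refine ⟨w₂.takeUntil y₁ hy₁w₂, fun hmem => hw₂ ?_⟩
            exact w₂.support_takeUntil_subset hy₁w₂ hmem
          exact (Set.eq_empty_iff_forall_notMem.mp hyS₂) y₁ ⟨this, hy₁A'⟩
        · -- then y₂ ∈ SubtreeOf y₁ b₁, contradicting disjointness from A'
          have : y₂ ∈ SubtreeOf G y₁ b₁ := by
            refine ⟨(w₁.append w₂.reverse).concat hych₂.1.symm, fun hmem => ?_⟩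
            rw [Walk.support_concat] at hmem
            rcases List.mem_append.mp hmem with h | h
            · rw [Walk.support_append] at h
              rcases List.mem_append.mp h with h | h
              · exact hw₁ h
              · have := List.mem_of_mem_tail h
                rw [Walk.support_reverse, List.mem_reverse] at this
                exact hy₁w₂ this
            · exact hyne (List.mem_singleton.mp h)
          exact (Set.eq_empty_iff_forall_notMem.mp hyS₁) y₂ ⟨this, hy₂A'⟩
    -- cardinality bookkeeping
    set Hs := ExtBoundary G x₀ A with hHs
    set Hs' := ExtBoundary G x₀ A' with hHs'
    have hHfin : Hs.Finite := extBoundary_finite hA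
    have hH'fin : Hs'.Finite := extBoundary_finite hA'
    have hDcard : (Hs' \ Hs).ncard ≤ 1 := by
      rcases Set.eq_empty_or_nonempty (Hs' \ Hs) with he | ⟨b, hb⟩
      · simp [he]
      · have hsub : Hs' \ Hs ⊆ {b} := fun z hz => by
          rw [Set.mem_singleton_iff]; exact hD z hz b hb
        calc (Hs' \ Hs).ncard ≤ ({b} : Set V).ncard :=
              Set.ncard_le_ncard hsub (Set.finite_singleton b)
          _ = 1 := Set.ncard_singleton b
    have h1 : Hs'.ncard ≤ (Hs ∩ Hs').ncard + 1 := by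
      have hsub : Hs' ⊆ (Hs ∩ Hs') ∪ (Hs' \ Hs) := by
        intro z hz
        by_cases hzH : z ∈ Hs
        · exact Or.inl ⟨hzH, hz⟩
        · exact Or.inr ⟨hz, hzH⟩
      calc Hs'.ncard ≤ ((Hs ∩ Hs') ∪ (Hs' \ Hs)).ncard :=
            Set.ncard_le_ncard hsub (((hHfin.inter_of_left _)).union hH'fin.diff)
        _ ≤ (Hs ∩ Hs').ncard + (Hs' \ Hs).ncard := Set.ncard_union_le _ _
        _ ≤ (Hs ∩ Hs').ncard + 1 := by omega
    have h2 : (Hs ∩ Hs').ncard + 2 ≤ Hs.ncard := by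
      have hsub : (Hs ∩ Hs') ∪ {c₁, c₂} ⊆ Hs := by
        rintro z (⟨hz, -⟩ | hz)
        · exact hz
        · rcases hz with rfl | rfl
          · exact hcH _ hch₁
          · exact hcH _ hch₂
      have hdisj : Disjoint (Hs ∩ Hs') ({c₁, c₂} : Set V) := by
        rw [Set.disjoint_right]
        rintro z (rfl | rfl) ⟨-, hz'⟩
        · exact hcH' _ hch₁ hz'
        · exact hcH' _ hch₂ hz'
      calc (Hs ∩ Hs').ncard + 2
          = (Hs ∩ Hs').ncard + ({c₁, c₂} : Set V).ncard := by rw [Set.ncard_pair hcne]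
        _ = ((Hs ∩ Hs') ∪ {c₁, c₂}).ncard :=
            (Set.ncard_union_eq hdisj (hHfin.inter_of_left _) (Set.toFinite _)).symm
        _ ≤ Hs.ncard := Set.ncard_le_ncard hsub hHfin
    omega
end

section
/- Let 𝒢 be a sub-σ-algebra of 𝔽, let Z be a nonnegative 𝒢-measurable random variable, and let Y be a square-integrable random variable with E[Y | 𝒢] ≥ 2Z almost surely and E[(Y − E[Y|𝒢])² | 𝒢] ≤ C·Z almost surely, where C > 0 is a constant. Then for every z > 0, P({Y < (3/2)z} ∩ {Z ≥ z}) ≤ (4C/z)·P(Z ≥ z). -/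
open MeasureTheory

theorem conditional_chebyshev_step {Ω : Type*} {m0 : MeasurableSpace Ω}
    (P : Measure Ω) [IsProbabilityMeasure P]
    (m : MeasurableSpace Ω) (hm : m ≤ m0)
    (Z Y : Ω → ℝ) (C : ℝ) (hC : 0 < C)
    (hZnn : ∀ ω, 0 ≤ Z ω) (hZmeas : Measurable[m] Z)
    (hY : MemLp Y 2 P)
    (hmean : (fun ω => 2 * Z ω) ≤ᵐ[P] P[Y | m])
    (hvar : P[(fun ω => (Y ω - (P[Y | m]) ω) ^ 2) | m] ≤ᵐ[P] fun ω => C * Z ω)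
    (z : ℝ) (hz : 0 < z) :
    P ({ω | Y ω < (3 / 2) * z} ∩ {ω | z ≤ Z ω})
      ≤ ENNReal.ofReal (4 * C / z) * P {ω | z ≤ Z ω} := by
  classical
  letI : MeasurableSpace Ω := m0
  set E : Ω → ℝ := P[Y | m] with hEdef
  set B : Set Ω := {ω | z ≤ Z ω} with hBdef
  have hBm : MeasurableSet[m] B := measurableSet_le measurable_const hZmeas
  have hBm0 : MeasurableSet[m0] B := hm _ hBm
  -- measurable version of Y
  obtain ⟨Y', hY'sm, hYY'⟩ := hY.1
  have hA'm : MeasurableSet[m0] {ω | Y' ω < (3 / 2) * z} :=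
    measurableSet_lt hY'sm.measurable measurable_const
  have hAB : P ({ω | Y ω < (3 / 2) * z} ∩ B) = P ({ω | Y' ω < (3 / 2) * z} ∩ B) := by
    apply measure_congr
    filter_upwards [hYY'] with ω hω
    change (Y ω < (3 / 2) * z ∧ z ≤ Z ω) = (Y' ω < (3 / 2) * z ∧ z ≤ Z ω)
    rw [hω]
  -- E is in L²
  have hYint : Integrable Y P := hY.integrable (by norm_num)
  have hE2 : MemLp E 2 P := by
    have hgE : ((condExpL2 ℝ ℝ hm (hY.toLp Y) : lpMeas ℝ ℝ m 2 P) : Ω → ℝ) =ᵐ[P] E := by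
      refine ae_eq_condExp_of_forall_setIntegral_eq hm hYint
        (fun s _ _ =>
          ((Lp.memLp ((condExpL2 ℝ ℝ hm (hY.toLp Y) : lpMeas ℝ ℝ m 2 P) : Lp ℝ 2 P)).integrable
            (by norm_num)).integrableOn)
        (fun s hs hμs => ?_) (lpMeas.aestronglyMeasurable _)
      rw [integral_condExpL2_eq hm (hY.toLp Y) hs hμs.ne]
      exact setIntegral_congr_ae (hm s hs) ((MemLp.coeFn_toLp hY).mono fun x hx _ => hx)
    exact (Lp.memLp ((condExpL2 ℝ ℝ hm (hY.toLp Y) : lpMeas ℝ ℝ m 2 P) : Lp ℝ 2 P)).ae_eq hgE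
  -- W is integrable
  set W : Ω → ℝ := fun ω => (Y ω - E ω) ^ 2 with hWdef
  have hWint : Integrable W P := (hY.sub hE2).integrable_sq
  have hWnn : ∀ ω, 0 ≤ W ω := fun ω => sq_nonneg _
  -- the weight function
  set h : Ω → ℝ := fun ω => if z ≤ Z ω then 4 / (z * Z ω) else 0 with hhdef
  have hhnn : ∀ ω, 0 ≤ h ω := by
    intro ω
    have hZω := hZnn ω
    by_cases hω : z ≤ Z ω
    · simp only [hhdef, hω, if_true]
      positivity
    · simp only [hhdef, hω, if_false, le_refl]
  have hhbd : ∀ ω, ‖h ω‖ ≤ 4 / z ^ 2 := by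
    intro ω
    have hZω := hZnn ω
    rw [Real.norm_eq_abs, abs_of_nonneg (hhnn ω)]
    by_cases hω : z ≤ Z ω
    · simp only [hhdef, hω, if_true]
      exact div_le_div_of_nonneg_left (by norm_num) (by positivity) (by nlinarith)
    · simp only [hhdef, hω, if_false]
      positivity
  have hhsm : StronglyMeasurable[m] h := by
    apply Measurable.stronglyMeasurable
    exact Measurable.ite (measurableSet_le measurable_const hZmeas)
      (measurable_const.div (measurable_const.mul hZmeas)) measurable_const
  have hhsm0 : StronglyMeasurable[m0] h := hhsm.mono hm
  -- integrabilities
  have hhW_int : Integrable (fun ω => h ω * W ω) P :=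
    hWint.bdd_mul hhsm0.aestronglyMeasurable (Filter.Eventually.of_forall hhbd)
  have hhEW_int : Integrable (fun ω => h ω * (P[W | m]) ω) P :=
    integrable_condExp.bdd_mul hhsm0.aestronglyMeasurable (Filter.Eventually.of_forall hhbd)
  have hInd_int : Integrable (B.indicator fun _ => (4 * C / z : ℝ)) P :=
    (integrable_const _).indicator hBm0
  -- pointwise: indicator (A' ∩ B) ≤ h * W a.e.
  have hpt : (({ω | Y' ω < (3 / 2) * z} ∩ B).indicator (fun _ => (1 : ℝ)))
      ≤ᵐ[P] fun ω => h ω * W ω := by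
    filter_upwards [hmean, hYY'] with ω hmω hyω
    by_cases hω : ω ∈ {ω | Y' ω < (3 / 2) * z} ∩ B
    · rw [Set.indicator_of_mem hω]
      obtain ⟨hω1, hω2⟩ := hω
      have hZω : z ≤ Z ω := hω2
      have hYω : Y ω < (3 / 2) * z := by rw [hyω]; exact hω1
      have hzZ : 0 < z * Z ω := by nlinarith
      have hEY : Z ω / 2 ≤ E ω - Y ω := by
        have : 2 * Z ω ≤ E ω := hmω
        nlinarith
      have hWlb : z * Z ω / 4 ≤ W ω := by
        have h1 : (Z ω / 2) ^ 2 ≤ (E ω - Y ω) ^ 2 := sq_le_sq' (by nlinarith) hEY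
        have h2 : (E ω - Y ω) ^ 2 = W ω := by rw [hWdef]; ring
        nlinarith
      simp only [hhdef, hZω, if_true]
      rw [div_mul_eq_mul_div, le_div_iff₀ hzZ, one_mul]
      nlinarith
    · rw [Set.indicator_of_notMem hω]
      exact mul_nonneg (hhnn ω) (hWnn ω)
  -- h * (C * Z) = (4C/z) * indicator B
  have hCZ : ∀ ω, h ω * (C * Z ω) = B.indicator (fun _ => (4 * C / z : ℝ)) ω := by
    intro ω
    by_cases hω : z ≤ Z ω
    · have hZpos : 0 < Z ω := lt_of_lt_of_le hz hω
      rw [Set.indicator_of_mem (show ω ∈ B from hω)]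
      simp only [hhdef, hω, if_true]
      field_simp
    · rw [Set.indicator_of_notMem (show ω ∉ B from hω)]
      simp only [hhdef, hω, if_false, zero_mul]
  -- chain of real inequalities
  have hreal : (P ({ω | Y' ω < (3 / 2) * z} ∩ B)).toReal ≤ (4 * C / z) * (P B).toReal := by
    have hpull := condExp_stronglyMeasurable_mul_of_bound hm hhsm hWint (4 / z ^ 2)
      (Filter.Eventually.of_forall hhbd)
    have h4 : ∫ ω, h ω * (P[W | m]) ω ∂P
        ≤ ∫ ω, B.indicator (fun _ => (4 * C / z : ℝ)) ω ∂P := by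
      apply integral_mono_ae hhEW_int hInd_int
      filter_upwards [hvar] with ω hvω
      rw [← hCZ ω]
      exact mul_le_mul_of_nonneg_left hvω (hhnn ω)
    calc (P ({ω | Y' ω < (3 / 2) * z} ∩ B)).toReal
        = ∫ ω, ({ω | Y' ω < (3 / 2) * z} ∩ B).indicator (fun _ => (1 : ℝ)) ω ∂P :=
          (integral_indicator_one (hA'm.inter hBm0)).symm
      _ ≤ ∫ ω, h ω * W ω ∂P :=
          integral_mono_ae ((integrable_const (1 : ℝ)).indicator (hA'm.inter hBm0)) hhW_int hpt
      _ = ∫ ω, (P[fun ω => h ω * W ω | m]) ω ∂P := (integral_condExp hm).symm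
      _ = ∫ ω, h ω * (P[W | m]) ω ∂P := integral_congr_ae hpull
      _ ≤ ∫ ω, B.indicator (fun _ => (4 * C / z : ℝ)) ω ∂P := h4
      _ = (4 * C / z) * (P B).toReal := by
          rw [integral_indicator_const _ hBm0]
          simp [smul_eq_mul, mul_comm, Measure.real]
  -- back to ENNReal
  rw [hAB]
  have hfin : P ({ω | Y' ω < (3 / 2) * z} ∩ B) ≠ ⊤ := measure_ne_top _ _
  have hc : 0 ≤ 4 * C / z := by positivity
  calc P ({ω | Y' ω < (3 / 2) * z} ∩ B)
      = ENNReal.ofReal (P ({ω | Y' ω < (3 / 2) * z} ∩ B)).toReal := by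
        rw [ENNReal.ofReal_toReal hfin]
    _ ≤ ENNReal.ofReal ((4 * C / z) * (P B).toReal) := ENNReal.ofReal_le_ofReal hreal
    _ = ENNReal.ofReal (4 * C / z) * ENNReal.ofReal (P B).toReal := ENNReal.ofReal_mul hc
    _ = ENNReal.ofReal (4 * C / z) * P B := by rw [ENNReal.ofReal_toReal (measure_ne_top _ _)]
end
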